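/- With F_V as above (α₁ ≥ α₂ ≥ α₃ > 0, α₁+α₂+α₃ = 1), for every η ≥ 0, lim_{V→∞} F_V(η) = (√2/(3π²))·η^{3/2}. -/

import Mathlib

open MeasureTheory Real Set Filter intervalIntegral


lemma integral_sqrt_one_sub_sq_half : ∫ x in (0:ℝ)..1, Real.sqrt (1 - x ^ 2) = π / 4 := by
  have hcont : Continuous fun x : ℝ => Real.sqrt (1 - x ^ 2) := by
    continuity
  have h1 : ∫ x in (-1:ℝ)..0, Real.sqrt (1 - x ^ 2) = ∫ x in (0:ℝ)..1, Real.sqrt (1 - x ^ 2) := by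
    have := intervalIntegral.integral_comp_neg (a := (0:ℝ)) (b := 1)
      (fun x : ℝ => Real.sqrt (1 - x ^ 2))
    simp only [neg_zero, neg_one_sq, neg_sq] at this ⊢
    rw [← this]
  have h2 : ∫ x in (-1:ℝ)..1, Real.sqrt (1 - x ^ 2)
      = (∫ x in (-1:ℝ)..0, Real.sqrt (1 - x ^ 2)) + ∫ x in (0:ℝ)..1, Real.sqrt (1 - x ^ 2) := by
    rw [intervalIntegral.integral_add_adjacent_intervals] <;>
      exact hcont.intervalIntegrable _ _
  have h3 := integral_sqrt_one_sub_sq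
  rw [h2, h1] at h3
  linarith


lemma integral_ellipse (b c t : ℝ) (hb : 0 < b) (ht : 0 ≤ t) :
    ∫ y in (0:ℝ)..(b * Real.sqrt t), c * Real.sqrt (t - y ^ 2 / b ^ 2)
      = π / 4 * (b * c * t) := by
  rcases eq_or_lt_of_le ht with h0 | ht'
  · simp [← h0]
  have hm : b * Real.sqrt t ≠ 0 := by positivity
  have key : ∀ y : ℝ, c * Real.sqrt (t - y ^ 2 / b ^ 2)
      = c * Real.sqrt t * Real.sqrt (1 - (y * (b * Real.sqrt t)⁻¹) ^ 2) := by
    intro y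
    rw [mul_assoc, ← Real.sqrt_mul ht]
    congr 1
    have : Real.sqrt t ^ 2 = t := Real.sq_sqrt ht
    congr 1
    rw [mul_inv, mul_pow, mul_pow, inv_pow, inv_pow, this]
    field_simp
  simp_rw [key]
  rw [intervalIntegral.integral_const_mul,
    intervalIntegral.integral_comp_mul_right (fun x => Real.sqrt (1 - x ^ 2)) (inv_ne_zero hm)]
  simp only [zero_mul, mul_inv_cancel₀ hm, inv_inv, smul_eq_mul]
  rw [integral_sqrt_one_sub_sq_half]
  have h2 : Real.sqrt t ^ 2 = t := Real.sq_sqrt ht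
  ring_nf
  rw [h2]
  ring


lemma area_quarter_ellipse (b c t : ℝ) (hb : 0 < b) (hc : 0 < c) (ht : 0 ≤ t) :
    volume {p : ℝ × ℝ | 0 ≤ p.1 ∧ 0 ≤ p.2 ∧ p.1 ^ 2 / b ^ 2 + p.2 ^ 2 / c ^ 2 ≤ t}
      = ENNReal.ofReal (π / 4 * (b * c * t)) := by
  set S := {p : ℝ × ℝ | 0 ≤ p.1 ∧ 0 ≤ p.2 ∧ p.1 ^ 2 / b ^ 2 + p.2 ^ 2 / c ^ 2 ≤ t} with hS
  have hmeas : MeasurableSet S := by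
    have : IsClosed S := by
      apply IsClosed.inter (isClosed_le continuous_const continuous_fst)
      apply IsClosed.inter (isClosed_le continuous_const continuous_snd)
      exact isClosed_le (((continuous_fst.pow 2).div_const _).add
        ((continuous_snd.pow 2).div_const _)) continuous_const
    exact this.measurableSet
  set m := b * Real.sqrt t with hm
  have hm0 : 0 ≤ m := by positivity
  set g : ℝ → ℝ := fun y => c * Real.sqrt (t - y ^ 2 / b ^ 2) with hg
  have hgc : Continuous g := by continuity
  have slice : ∀ y : ℝ, Prod.mk y ⁻¹' S = if y ∈ Icc 0 m then Icc 0 (g y) else (∅ : Set ℝ) := by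
    intro y
    by_cases hy : y ∈ Icc 0 m
    · rw [if_pos hy]
      obtain ⟨hy0, hym⟩ := hy
      have hyt : y ^ 2 / b ^ 2 ≤ t := by
        rw [div_le_iff₀ (by positivity)]
        calc y ^ 2 ≤ m ^ 2 := by nlinarith
        _ = t * b ^ 2 := by rw [hm]; rw [mul_pow, Real.sq_sqrt ht]; ring
      ext z
      simp only [mem_preimage, hS, mem_setOf_eq, mem_Icc]
      constructor
      · rintro ⟨-, hz0, hsum⟩
        refine ⟨hz0, ?_⟩
        have hgy : g y = Real.sqrt (c ^ 2 * (t - y ^ 2 / b ^ 2)) := by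
          rw [hg, Real.sqrt_mul (sq_nonneg c), Real.sqrt_sq hc.le]
        rw [hgy, Real.le_sqrt hz0 (mul_nonneg (sq_nonneg c) (sub_nonneg.mpr hyt))]
        have key : c ^ 2 * (t - y ^ 2 / b ^ 2) * b ^ 2 = t * (b ^ 2 * c ^ 2) - y ^ 2 * c ^ 2 := by
          field_simp
        rw [div_add_div _ _ (by positivity : (b:ℝ) ^ 2 ≠ 0) (by positivity : (c:ℝ) ^ 2 ≠ 0),
          div_le_iff₀ (by positivity)] at hsum
        rw [← mul_le_mul_iff_left₀ (by positivity : (0:ℝ) < b ^ 2), key]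
        nlinarith [hsum]
      · rintro ⟨hz0, hzg⟩
        refine ⟨hy0, hz0, ?_⟩
        have h1 : z ^ 2 ≤ c ^ 2 * (t - y ^ 2 / b ^ 2) := by
          have h2 : z ^ 2 ≤ (g y) ^ 2 := pow_le_pow_left₀ hz0 hzg 2
          have h3 : (g y) ^ 2 = c ^ 2 * (t - y ^ 2 / b ^ 2) := by
            rw [hg]; rw [mul_pow, Real.sq_sqrt (sub_nonneg.mpr hyt)]
          linarith [h2, h3.le, h3.ge]
        have key : c ^ 2 * (t - y ^ 2 / b ^ 2) * b ^ 2 = t * (b ^ 2 * c ^ 2) - y ^ 2 * c ^ 2 := by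
          field_simp
        rw [div_add_div _ _ (by positivity : (b:ℝ) ^ 2 ≠ 0) (by positivity : (c:ℝ) ^ 2 ≠ 0),
          div_le_iff₀ (by positivity)]
        nlinarith [mul_le_mul_of_nonneg_right h1 (sq_nonneg b), key]
    · rw [if_neg hy]
      ext z
      simp only [mem_preimage, hS, mem_setOf_eq, mem_empty_iff_false, iff_false]
      rintro ⟨hy0, hz0, hsum⟩
      apply hy
      refine ⟨hy0, ?_⟩
      rw [hm]
      have h2 : y ^ 2 / b ^ 2 ≤ t := by
        have : 0 ≤ z ^ 2 / c ^ 2 := by positivity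
        linarith
      have h3 : y ^ 2 ≤ t * b ^ 2 := (div_le_iff₀ (by positivity)).mp h2
      have h4 : y ≤ Real.sqrt (t * b ^ 2) :=
        (Real.le_sqrt hy0 (mul_nonneg ht (sq_nonneg b))).mpr h3
      rwa [Real.sqrt_mul ht, Real.sqrt_sq hb.le, mul_comm] at h4
  rw [MeasureTheory.Measure.volume_eq_prod ℝ ℝ, Measure.prod_apply hmeas]
  have : ∀ y : ℝ, volume (Prod.mk y ⁻¹' S)
      = (Icc 0 m).indicator (fun y => ENNReal.ofReal (g y)) y := by
    intro y
    rw [slice y]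
    by_cases hy : y ∈ Icc 0 m
    · rw [if_pos hy, Set.indicator_of_mem hy, Real.volume_Icc, sub_zero]
    · rw [if_neg hy, Set.indicator_of_notMem hy, measure_empty]
  simp_rw [this]
  rw [lintegral_indicator measurableSet_Icc]
  rw [← ofReal_integral_eq_lintegral_ofReal (hgc.integrableOn_Icc)
    (Filter.Eventually.of_forall fun y => by positivity)]
  congr 1
  rw [MeasureTheory.integral_Icc_eq_integral_Ioc, ← intervalIntegral.integral_of_le hm0]
  exact integral_ellipse b c t hb ht


lemma vol_octant_ellipsoid (a b c : ℝ) (ha : 0 < a) (hb : 0 < b) (hc : 0 < c) :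
    volume {x : ℝ × ℝ × ℝ | 0 ≤ x.1 ∧ 0 ≤ x.2.1 ∧ 0 ≤ x.2.2 ∧
      x.1 ^ 2 / a ^ 2 + x.2.1 ^ 2 / b ^ 2 + x.2.2 ^ 2 / c ^ 2 ≤ 1}
      = ENNReal.ofReal (π / 6 * (a * b * c)) := by
  set S := {x : ℝ × ℝ × ℝ | 0 ≤ x.1 ∧ 0 ≤ x.2.1 ∧ 0 ≤ x.2.2 ∧
      x.1 ^ 2 / a ^ 2 + x.2.1 ^ 2 / b ^ 2 + x.2.2 ^ 2 / c ^ 2 ≤ 1} with hS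
  have hmeas : MeasurableSet S := by
    have : IsClosed S := by
      have c1 : Continuous fun x : ℝ × ℝ × ℝ => x.1 := continuous_fst
      have c2 : Continuous fun x : ℝ × ℝ × ℝ => x.2.1 := continuous_fst.comp continuous_snd
      have c3 : Continuous fun x : ℝ × ℝ × ℝ => x.2.2 := continuous_snd.comp continuous_snd
      apply IsClosed.inter (isClosed_le continuous_const c1)
      apply IsClosed.inter (isClosed_le continuous_const c2)
      apply IsClosed.inter (isClosed_le continuous_const c3)
      exact isClosed_le ((((c1.pow 2).div_const _).add
        ((c2.pow 2).div_const _)).add ((c3.pow 2).div_const _)) continuous_const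
    exact this.measurableSet
  have hvol : ∀ x : ℝ, volume (Prod.mk x ⁻¹' S)
      = (Icc 0 a).indicator (fun x => ENNReal.ofReal (π / 4 * (b * c * (1 - x ^ 2 / a ^ 2)))) x := by
    intro x
    by_cases hx : x ∈ Icc 0 a
    · rw [Set.indicator_of_mem hx]
      obtain ⟨hx0, hxa⟩ := hx
      have ht : (0:ℝ) ≤ 1 - x ^ 2 / a ^ 2 := by
        have : x ^ 2 ≤ a ^ 2 := by nlinarith
        have := div_le_one_of_le₀ this (sq_nonneg a)
        linarith
      have : Prod.mk x ⁻¹' S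
          = {p : ℝ × ℝ | 0 ≤ p.1 ∧ 0 ≤ p.2 ∧ p.1 ^ 2 / b ^ 2 + p.2 ^ 2 / c ^ 2 ≤ 1 - x ^ 2 / a ^ 2} := by
        ext p
        simp only [mem_preimage, hS, mem_setOf_eq]
        constructor
        · rintro ⟨-, h1, h2, h3⟩; exact ⟨h1, h2, by linarith⟩
        · rintro ⟨h1, h2, h3⟩; exact ⟨hx0, h1, h2, by linarith⟩
      rw [this, area_quarter_ellipse b c _ hb hc ht]
    · rw [Set.indicator_of_notMem hx]
      have : Prod.mk x ⁻¹' S = (∅ : Set (ℝ × ℝ)) := by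
        ext p
        simp only [mem_preimage, hS, mem_setOf_eq, mem_empty_iff_false, iff_false]
        rintro ⟨hx0, h1, h2, h3⟩
        apply hx
        refine ⟨hx0, ?_⟩
        have hb2 : 0 ≤ p.1 ^ 2 / b ^ 2 := by positivity
        have hc2 : 0 ≤ p.2 ^ 2 / c ^ 2 := by positivity
        have h4 : x ^ 2 / a ^ 2 ≤ 1 := by linarith
        have h5 : x ^ 2 ≤ 1 * a ^ 2 := (div_le_iff₀ (by positivity)).mp h4
        nlinarith
      rw [this, measure_empty]
  rw [MeasureTheory.Measure.volume_eq_prod ℝ (ℝ × ℝ), Measure.prod_apply hmeas]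
  simp_rw [hvol]
  rw [lintegral_indicator measurableSet_Icc]
  have hcont : Continuous (fun x : ℝ => π / 4 * (b * c * (1 - x ^ 2 / a ^ 2))) := by
    exact continuous_const.mul (continuous_const.mul
      (continuous_const.sub ((continuous_id.pow 2).div_const _)))
  rw [← ofReal_integral_eq_lintegral_ofReal (hcont.integrableOn_Icc)
    ((ae_restrict_iff' measurableSet_Icc).mpr (Filter.Eventually.of_forall fun x hx => by
      simp only [mem_Icc] at hx
      have : x ^ 2 ≤ a ^ 2 := by nlinarith [hx.1, hx.2]
      have h6 : 0 ≤ 1 - x ^ 2 / a ^ 2 := by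
        have := div_le_one_of_le₀ this (sq_nonneg a); linarith
      positivity))]
  congr 1
  rw [MeasureTheory.integral_Icc_eq_integral_Ioc, ← intervalIntegral.integral_of_le ha.le]
  have e1 : ∀ x : ℝ, π / 4 * (b * c * (1 - x ^ 2 / a ^ 2))
      = π / 4 * (b * c) * (1 - x ^ 2 / a ^ 2) := fun x => by ring
  simp_rw [e1]
  rw [intervalIntegral.integral_const_mul]
  have e2 : ∫ x in (0:ℝ)..a, (1 - x ^ 2 / a ^ 2)
      = (∫ x in (0:ℝ)..a, (1:ℝ)) - ∫ x in (0:ℝ)..a, x ^ 2 / a ^ 2 := by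
    apply intervalIntegral.integral_sub intervalIntegrable_const
    exact (((continuous_id.pow 2).div_const _)).intervalIntegrable _ _
  rw [e2, intervalIntegral.integral_div, integral_pow]
  rw [show (∫ x in (0:ℝ)..a, (1:ℝ)) = a - 0 from integral_one]
  field_simp
  ring


noncomputable def cube (n : ℕ × ℕ × ℕ) : Set (ℝ × ℝ × ℝ) :=
  Ico ((n.1:ℝ)-1) n.1 ×ˢ (Ico ((n.2.1:ℝ)-1) n.2.1 ×ˢ Ico ((n.2.2:ℝ)-1) n.2.2)

lemma Ico_nat_eq {a b : ℕ} {x : ℝ} (h1 : (a:ℝ)-1 ≤ x) (h2 : x < a)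
    (h3 : (b:ℝ)-1 ≤ x) (h4 : x < b) : a = b := by
  rcases lt_trichotomy a b with h|h|h
  · exfalso
    have h' : a + 1 ≤ b := h
    have : (a:ℝ) + 1 ≤ b := by exact_mod_cast h'
    linarith
  · exact h
  · exfalso
    have h' : b + 1 ≤ a := h
    have : (b:ℝ) + 1 ≤ a := by exact_mod_cast h'
    linarith

lemma cube_measurable (n : ℕ × ℕ × ℕ) : MeasurableSet (cube n) :=
  measurableSet_Ico.prod (measurableSet_Ico.prod measurableSet_Ico)

lemma volume_cube (n : ℕ × ℕ × ℕ) : volume (cube n) = 1 := by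
  rw [cube, MeasureTheory.Measure.volume_eq_prod ℝ (ℝ × ℝ), Measure.prod_prod,
    MeasureTheory.Measure.volume_eq_prod ℝ ℝ, Measure.prod_prod,
    Real.volume_Ico, Real.volume_Ico, Real.volume_Ico]
  norm_num

lemma cube_pairwise_disjoint (A : Set (ℕ × ℕ × ℕ)) :
    A.PairwiseDisjoint cube := by
  intro n _ m _ hnm
  rw [Function.onFun]
  rw [Set.disjoint_left]
  rintro ⟨x, y, z⟩ hx hy
  obtain ⟨hx1, hx2, hx3⟩ := hx
  obtain ⟨hy1, hy2, hy3⟩ := hy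
  simp only [mem_Ico] at hx1 hx2 hx3 hy1 hy2 hy3
  apply hnm
  have e1 := Ico_nat_eq hx1.1 hx1.2 hy1.1 hy1.2
  have e2 := Ico_nat_eq hx2.1 hx2.2 hy2.1 hy2.2
  have e3 := Ico_nat_eq hx3.1 hx3.2 hy3.1 hy3.2
  exact Prod.ext e1 (Prod.ext e2 e3)

lemma volume_biUnion_cubes (A : Set (ℕ × ℕ × ℕ)) (hA : A.Finite) :
    volume (⋃ n ∈ A, cube n) = A.ncard := by
  have : (⋃ n ∈ A, cube n) = ⋃ n ∈ hA.toFinset, cube n := by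
    simp [Set.Finite.mem_toFinset]
  rw [this, measure_biUnion_finset ?hd (fun b _ => cube_measurable b)]
  · simp only [volume_cube, Finset.sum_const, nsmul_eq_mul, mul_one]
    rw [Set.ncard_eq_toFinset_card A hA]
  · intro n hn m hm hnm
    exact cube_pairwise_disjoint A (by simpa [Set.Finite.mem_toFinset] using hn)
      (by simpa [Set.Finite.mem_toFinset] using hm) hnm

/-- The finite-volume integrated density of states, shifted by the ground-state
energy, for the anisotropic box with sides V^α₁, V^α₂, V^α₃. -/
noncomputable def FV (α₁ α₂ α₃ V η : ℝ) : ℝ :=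
  (1 / V) * ({n : ℕ × ℕ × ℕ | 0 < n.1 ∧ 0 < n.2.1 ∧ 0 < n.2.2 ∧
    Real.pi ^ 2 / 2 * ((n.1 : ℝ) ^ 2 / V ^ (2 * α₁) + (n.2.1 : ℝ) ^ 2 / V ^ (2 * α₂) +
        (n.2.2 : ℝ) ^ 2 / V ^ (2 * α₃)) ≤
      η + Real.pi ^ 2 / 2 * (V ^ (-(2 * α₁)) + V ^ (-(2 * α₂)) + V ^ (-(2 * α₃)))} :
    Set (ℕ × ℕ × ℕ)).ncard




lemma div_le_sqrt' {u L s : ℝ} (hu : 0 ≤ u) (hL : 0 < L) (hs : 0 ≤ s)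
    (h : u ^ 2 / L ^ 2 ≤ s) : u / L ≤ Real.sqrt s :=
  (Real.le_sqrt (div_nonneg hu hL.le) hs).mpr (by rwa [div_pow])

lemma expand3 (x y z a b c u : ℝ) :
    x ^ 2 / (u * a) ^ 2 + y ^ 2 / (u * b) ^ 2 + z ^ 2 / (u * c) ^ 2
      = (x ^ 2 / a ^ 2 + y ^ 2 / b ^ 2 + z ^ 2 / c ^ 2) / u ^ 2 := by
  rw [mul_pow, mul_pow, mul_pow, mul_comm (u ^ 2) (a ^ 2), mul_comm (u ^ 2) (b ^ 2),
    mul_comm (u ^ 2) (c ^ 2), ← div_div, ← div_div, ← div_div,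
    ← add_div, ← add_div]

lemma sum_shift_bound {x1 x2 x3 w1 w2 w3 L1 L2 L3 r : ℝ}
    (hL1 : 0 < L1) (hL2 : 0 < L2) (hL3 : 0 < L3)
    (h31 : L3 ≤ L1) (h32 : L3 ≤ L2) (hr0 : 0 ≤ r)
    (hw1 : 0 ≤ w1) (hw2 : 0 ≤ w2) (hw3 : 0 ≤ w3)
    (hx1 : 0 ≤ x1) (hx2 : 0 ≤ x2) (hx3 : 0 ≤ x3)
    (hx1w : x1 ≤ w1 + 1) (hx2w : x2 ≤ w2 + 1) (hx3w : x3 ≤ w3 + 1)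
    (hw : w1 ^ 2 / L1 ^ 2 + w2 ^ 2 / L2 ^ 2 + w3 ^ 2 / L3 ^ 2 ≤ r ^ 2) :
    x1 ^ 2 / L1 ^ 2 + x2 ^ 2 / L2 ^ 2 + x3 ^ 2 / L3 ^ 2
      ≤ r ^ 2 + 6 * r * L3⁻¹ + ((L1 ^ 2)⁻¹ + (L2 ^ 2)⁻¹ + (L3 ^ 2)⁻¹) := by
  have k1 : (0:ℝ) ≤ w1 ^ 2 / L1 ^ 2 := by positivity
  have k2 : (0:ℝ) ≤ w2 ^ 2 / L2 ^ 2 := by positivity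
  have k3 : (0:ℝ) ≤ w3 ^ 2 / L3 ^ 2 := by positivity
  have c1 : w1 / L1 ≤ r := by
    have h := div_le_sqrt' hw1 hL1 (sq_nonneg r) (by linarith)
    rwa [Real.sqrt_sq hr0] at h
  have c2 : w2 / L2 ≤ r := by
    have h := div_le_sqrt' hw2 hL2 (sq_nonneg r) (by linarith)
    rwa [Real.sqrt_sq hr0] at h
  have c3 : w3 / L3 ≤ r := by
    have h := div_le_sqrt' hw3 hL3 (sq_nonneg r) (by linarith)
    rwa [Real.sqrt_sq hr0] at h
  have i1 : L1⁻¹ ≤ L3⁻¹ := inv_anti₀ hL3 h31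
  have i2 : L2⁻¹ ≤ L3⁻¹ := inv_anti₀ hL3 h32
  have i3 : L3⁻¹ ≤ L3⁻¹ := le_rfl
  have m1 : w1 / L1 * L1⁻¹ ≤ r * L3⁻¹ :=
    mul_le_mul c1 i1 (inv_nonneg.mpr hL1.le) hr0
  have m2 : w2 / L2 * L2⁻¹ ≤ r * L3⁻¹ :=
    mul_le_mul c2 i2 (inv_nonneg.mpr hL2.le) hr0
  have m3 : w3 / L3 * L3⁻¹ ≤ r * L3⁻¹ :=
    mul_le_mul c3 i3 (inv_nonneg.mpr hL3.le) hr0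
  have s1 : x1 ^ 2 / L1 ^ 2 ≤ (w1 + 1) ^ 2 / L1 ^ 2 :=
    (div_le_div_iff_of_pos_right (by positivity)).mpr (pow_le_pow_left₀ hx1 hx1w 2)
  have s2 : x2 ^ 2 / L2 ^ 2 ≤ (w2 + 1) ^ 2 / L2 ^ 2 :=
    (div_le_div_iff_of_pos_right (by positivity)).mpr (pow_le_pow_left₀ hx2 hx2w 2)
  have s3 : x3 ^ 2 / L3 ^ 2 ≤ (w3 + 1) ^ 2 / L3 ^ 2 :=
    (div_le_div_iff_of_pos_right (by positivity)).mpr (pow_le_pow_left₀ hx3 hx3w 2)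
  have d1 : (w1 + 1) ^ 2 / L1 ^ 2 = w1 ^ 2 / L1 ^ 2 + 2 * (w1 / L1 * L1⁻¹) + (L1 ^ 2)⁻¹ := by
    field_simp
    ring
  have d2 : (w2 + 1) ^ 2 / L2 ^ 2 = w2 ^ 2 / L2 ^ 2 + 2 * (w2 / L2 * L2⁻¹) + (L2 ^ 2)⁻¹ := by
    field_simp
    ring
  have d3 : (w3 + 1) ^ 2 / L3 ^ 2 = w3 ^ 2 / L3 ^ 2 + 2 * (w3 / L3 * L3⁻¹) + (L3 ^ 2)⁻¹ := by
    field_simp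
    ring
  linarith

set_option maxHeartbeats 1000000 in
lemma key (α₁ α₂ α₃ : ℝ) (h12 : α₂ ≤ α₁) (h23 : α₃ ≤ α₂) (h3 : 0 < α₃)
    (hsum : α₁ + α₂ + α₃ = 1) (η r V : ℝ) (hη : 0 ≤ η) (hr0 : 0 ≤ r)
    (hr2 : r ^ 2 = 2 * η / π ^ 2) (hV : 1 ≤ V) :
    π / 6 * Real.sqrt (max (r ^ 2 - 6 * r * V ^ (-α₃)) 0) ^ 3 ≤ FV α₁ α₂ α₃ V η ∧
    FV α₁ α₂ α₃ V η ≤ π / 6 * Real.sqrt (r ^ 2 + 6 * r * V ^ (-α₃)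
      + (V ^ (-(2 * α₁)) + V ^ (-(2 * α₂)) + V ^ (-(2 * α₃)))) ^ 3 := by
  have hV0 : (0:ℝ) < V := lt_of_lt_of_le one_pos hV
  have h2 : 0 < α₂ := lt_of_lt_of_le h3 h23
  have h1 : 0 < α₁ := lt_of_lt_of_le h2 h12
  set L1 := V ^ α₁ with hL1def
  set L2 := V ^ α₂ with hL2def
  set L3 := V ^ α₃ with hL3def
  have hL1 : 1 ≤ L1 := Real.one_le_rpow hV h1.le
  have hL2 : 1 ≤ L2 := Real.one_le_rpow hV h2.le
  have hL3 : 1 ≤ L3 := Real.one_le_rpow hV h3.le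
  have hL10 : 0 < L1 := lt_of_lt_of_le one_pos hL1
  have hL20 : 0 < L2 := lt_of_lt_of_le one_pos hL2
  have hL30 : 0 < L3 := lt_of_lt_of_le one_pos hL3
  have hL31 : L3 ≤ L1 := Real.rpow_le_rpow_of_exponent_le hV (le_trans h23 h12)
  have hL21 : L2 ≤ L1 := Real.rpow_le_rpow_of_exponent_le hV h12
  have hL32 : L3 ≤ L2 := Real.rpow_le_rpow_of_exponent_le hV h23
  have hprod : L1 * (L2 * L3) = V := by
    rw [hL1def, hL2def, hL3def, ← Real.rpow_add hV0, ← Real.rpow_add hV0, ← add_assoc,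
      hsum, Real.rpow_one]
  have e1 : V ^ (2 * α₁) = L1 ^ 2 := by
    rw [two_mul, Real.rpow_add hV0, sq]
  have e2 : V ^ (2 * α₂) = L2 ^ 2 := by
    rw [two_mul, Real.rpow_add hV0, sq]
  have e3 : V ^ (2 * α₃) = L3 ^ 2 := by
    rw [two_mul, Real.rpow_add hV0, sq]
  have e1' : V ^ (-(2 * α₁)) = (L1 ^ 2)⁻¹ := by rw [Real.rpow_neg hV0.le, e1]
  have e2' : V ^ (-(2 * α₂)) = (L2 ^ 2)⁻¹ := by rw [Real.rpow_neg hV0.le, e2]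
  have e3' : V ^ (-(2 * α₃)) = (L3 ^ 2)⁻¹ := by rw [Real.rpow_neg hV0.le, e3]
  have einv : V ^ (-α₃) = L3⁻¹ := by rw [Real.rpow_neg hV0.le, hL3def]
  set dsq := (L1 ^ 2)⁻¹ + (L2 ^ 2)⁻¹ + (L3 ^ 2)⁻¹ with hdsq
  have hdsq0 : 0 < dsq := by positivity
  clear_value L1 L2 L3 dsq
  clear hL1def hL2def hL3def
  set A := {n : ℕ × ℕ × ℕ | 0 < n.1 ∧ 0 < n.2.1 ∧ 0 < n.2.2 ∧
    Real.pi ^ 2 / 2 * ((n.1 : ℝ) ^ 2 / V ^ (2 * α₁) + (n.2.1 : ℝ) ^ 2 / V ^ (2 * α₂) +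
        (n.2.2 : ℝ) ^ 2 / V ^ (2 * α₃)) ≤
      η + Real.pi ^ 2 / 2 * (V ^ (-(2 * α₁)) + V ^ (-(2 * α₂)) + V ^ (-(2 * α₃)))} with hA
  have hπ := Real.pi_pos
  have hmem : ∀ n : ℕ × ℕ × ℕ, n ∈ A ↔ (0 < n.1 ∧ 0 < n.2.1 ∧ 0 < n.2.2 ∧
      ((n.1:ℝ) ^ 2 / L1 ^ 2 + (n.2.1:ℝ) ^ 2 / L2 ^ 2 + (n.2.2:ℝ) ^ 2 / L3 ^ 2
        ≤ r ^ 2 + dsq)) := by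
    intro n
    rw [hA]
    simp only [mem_setOf_eq, e1, e2, e3, e1', e2', e3']
    refine and_congr_right fun _ => and_congr_right fun _ => and_congr_right fun _ => ?_
    rw [hr2]
    have hπ2 : (0:ℝ) < π ^ 2 / 2 := by positivity
    have key : π ^ 2 / 2 * (2 * η / π ^ 2 + dsq) = η + π ^ 2 / 2 * dsq := by
      field_simp
    rw [← hdsq, ← key, mul_le_mul_iff_right₀ hπ2]
  -- finiteness
  have hfin : A.Finite := by
    set C := Real.sqrt (r ^ 2 + dsq) * L1 with hC
    apply Set.Finite.subset ((Set.finite_Iic (⌈C⌉₊ : ℕ)).prod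
      ((Set.finite_Iic (⌈C⌉₊ : ℕ)).prod (Set.finite_Iic (⌈C⌉₊ : ℕ))))
    rintro ⟨n1, n2, n3⟩ hn
    rw [hmem] at hn
    obtain ⟨-, -, -, hq⟩ := hn
    have hs0 : (0:ℝ) ≤ r ^ 2 + dsq := by positivity
    have hb : ∀ (u : ℝ) (L : ℝ), 0 ≤ u → 0 < L → L ≤ L1 → u ^ 2 / L ^ 2 ≤ r ^ 2 + dsq →
        u ≤ C := by
      intro u L hu hL hLle h
      have := div_le_sqrt' hu hL hs0 h
      calc u = u / L * L := by field_simp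
      _ ≤ Real.sqrt (r ^ 2 + dsq) * L := by
          apply mul_le_mul_of_nonneg_right this hL.le
      _ ≤ C := by
          rw [hC]
          exact mul_le_mul_of_nonneg_left hLle (Real.sqrt_nonneg _)
    have t1 : (0:ℝ) ≤ (n1:ℝ) ^ 2 / L1 ^ 2 := by positivity
    have t2 : (0:ℝ) ≤ (n2:ℝ) ^ 2 / L2 ^ 2 := by positivity
    have t3 : (0:ℝ) ≤ (n3:ℝ) ^ 2 / L3 ^ 2 := by positivity
    have q1 : (n1:ℝ) ^ 2 / L1 ^ 2 ≤ r ^ 2 + dsq := by linarith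
    have q2 : (n2:ℝ) ^ 2 / L2 ^ 2 ≤ r ^ 2 + dsq := by linarith
    have q3 : (n3:ℝ) ^ 2 / L3 ^ 2 ≤ r ^ 2 + dsq := by linarith
    have b1 : (n1:ℝ) ≤ C := hb _ _ (Nat.cast_nonneg _) hL10 le_rfl q1
    have b2 : (n2:ℝ) ≤ C := hb _ _ (Nat.cast_nonneg _) hL20 hL21 q2
    have b3 : (n3:ℝ) ≤ C := hb _ _ (Nat.cast_nonneg _) hL30 hL31 q3
    refine ⟨?_, ?_, ?_⟩ <;> simp only [mem_Iic]
    · exact_mod_cast le_trans b1 (Nat.le_ceil C)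
    · exact_mod_cast le_trans b2 (Nat.le_ceil C)
    · exact_mod_cast le_trans b3 (Nat.le_ceil C)

  have hVolU : volume (⋃ n ∈ A, cube n) = (A.ncard : ENNReal) := volume_biUnion_cubes A hfin
  have hFV : FV α₁ α₂ α₃ V η = (A.ncard : ℝ) / V := by
    unfold FV
    rw [← hA, one_div, inv_mul_eq_div]
  clear_value A
  clear hA
  set ub := r ^ 2 + 6 * r * L3⁻¹ + dsq with hubdef
  clear_value ub
  have h6r : (0:ℝ) ≤ 6 * r * L3⁻¹ := by
    apply mul_nonneg (mul_nonneg (by norm_num) hr0) (inv_nonneg.mpr hL30.le)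
  have hub0 : 0 < ub := by
    have := sq_nonneg r
    rw [hubdef]
    linarith
  set u := Real.sqrt ub with hudef
  have hu0 : 0 < u := Real.sqrt_pos.mpr hub0
  have hu2 : u ^ 2 = ub := Real.sq_sqrt hub0.le
  clear_value u
  -- upper bound
  have hsubU : (⋃ n ∈ A, cube n) ⊆
      {x : ℝ × ℝ × ℝ | 0 ≤ x.1 ∧ 0 ≤ x.2.1 ∧ 0 ≤ x.2.2 ∧
        x.1 ^ 2 / (u * L1) ^ 2 + x.2.1 ^ 2 / (u * L2) ^ 2 + x.2.2 ^ 2 / (u * L3) ^ 2 ≤ 1} := by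
    rintro ⟨x, y, z⟩ hx
    simp only [mem_iUnion, exists_prop] at hx
    obtain ⟨n, hn, hcube⟩ := hx
    rw [hmem] at hn
    obtain ⟨hn1, hn2, hn3, hq⟩ := hn
    rw [cube] at hcube
    obtain ⟨hc1, hc2, hc3⟩ := hcube
    simp only [mem_Ico] at hc1 hc2 hc3
    have hn1' : (1:ℝ) ≤ (n.1:ℝ) := by exact_mod_cast hn1
    have hn2' : (1:ℝ) ≤ (n.2.1:ℝ) := by exact_mod_cast hn2
    have hn3' : (1:ℝ) ≤ (n.2.2:ℝ) := by exact_mod_cast hn3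
    have hx0 : (0:ℝ) ≤ x := by linarith [hc1.1]
    have hy0 : (0:ℝ) ≤ y := by linarith [hc2.1]
    have hz0 : (0:ℝ) ≤ z := by linarith [hc3.1]
    refine ⟨hx0, hy0, hz0, ?_⟩
    -- shift to w = n - 1
    set w1 := (n.1:ℝ) - 1 with hw1def
    set w2 := (n.2.1:ℝ) - 1 with hw2def
    set w3 := (n.2.2:ℝ) - 1 with hw3def
    have hw1 : 0 ≤ w1 := by rw [hw1def]; linarith
    have hw2 : 0 ≤ w2 := by rw [hw2def]; linarith
    have hw3 : 0 ≤ w3 := by rw [hw3def]; linarith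
    have hw : w1 ^ 2 / L1 ^ 2 + w2 ^ 2 / L2 ^ 2 + w3 ^ 2 / L3 ^ 2 ≤ r ^ 2 := by
      have d1 : (n.1:ℝ) ^ 2 / L1 ^ 2
          = w1 ^ 2 / L1 ^ 2 + 2 * (w1 / L1 ^ 2) + (L1 ^ 2)⁻¹ := by
        rw [hw1def]; field_simp; ring
      have d2 : (n.2.1:ℝ) ^ 2 / L2 ^ 2
          = w2 ^ 2 / L2 ^ 2 + 2 * (w2 / L2 ^ 2) + (L2 ^ 2)⁻¹ := by
        rw [hw2def]; field_simp; ring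
      have d3 : (n.2.2:ℝ) ^ 2 / L3 ^ 2
          = w3 ^ 2 / L3 ^ 2 + 2 * (w3 / L3 ^ 2) + (L3 ^ 2)⁻¹ := by
        rw [hw3def]; field_simp; ring
      have p1 : 0 ≤ w1 / L1 ^ 2 := div_nonneg hw1 (sq_nonneg L1)
      have p2 : 0 ≤ w2 / L2 ^ 2 := div_nonneg hw2 (sq_nonneg L2)
      have p3 : 0 ≤ w3 / L3 ^ 2 := div_nonneg hw3 (sq_nonneg L3)
      rw [d1, d2, d3, hdsq] at hq
      linarith
    have hX : x ^ 2 / L1 ^ 2 + y ^ 2 / L2 ^ 2 + z ^ 2 / L3 ^ 2 ≤ ub := by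
      have := sum_shift_bound hL10 hL20 hL30 hL31 hL32 hr0 hw1 hw2 hw3 hx0 hy0 hz0
        (by linarith [hc1.2]) (by linarith [hc2.2]) (by linarith [hc3.2]) hw
      rw [hubdef, hdsq]
      exact this
    rw [expand3, div_le_one (by positivity), hu2]
    exact hX
  have hU : FV α₁ α₂ α₃ V η ≤ π / 6 * u ^ 3 := by
    have hmono := measure_mono (μ := volume) hsubU
    rw [hVolU, vol_octant_ellipsoid (u * L1) (u * L2) (u * L3)
      (by positivity) (by positivity) (by positivity)] at hmono
    rw [← ENNReal.ofReal_natCast] at hmono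
    have hNle : (A.ncard : ℝ) ≤ π / 6 * (u * L1 * (u * L2) * (u * L3)) :=
      (ENNReal.ofReal_le_ofReal_iff (by positivity)).mp hmono
    have heq : π / 6 * (u * L1 * (u * L2) * (u * L3)) = π / 6 * u ^ 3 * V := by
      rw [← hprod]; ring
    rw [hFV, div_le_iff₀ hV0]
    rw [heq] at hNle
    exact hNle
  constructor
  · -- lower bound
    rcases le_or_gt (r ^ 2 - 6 * r * V ^ (-α₃)) 0 with hneg | hpos
    · rw [max_eq_right hneg, Real.sqrt_zero]
      rw [hFV]
      have : (0:ℝ) ≤ (A.ncard : ℝ) / V := by positivity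
      simpa using this
    · rw [einv] at hpos ⊢
      set lb := r ^ 2 - 6 * r * L3⁻¹ with hlbdef
      clear_value lb
      rw [max_eq_left hpos.le]
      set ρ := Real.sqrt lb with hρdef
      have hρ0 : 0 < ρ := Real.sqrt_pos.mpr hpos
      have hρ2 : ρ ^ 2 = lb := Real.sq_sqrt hpos.le
      have hρr : ρ ≤ r := by
        have hlr : lb ≤ r ^ 2 := by rw [hlbdef]; linarith
        calc ρ = Real.sqrt lb := hρdef
        _ ≤ Real.sqrt (r ^ 2) := Real.sqrt_le_sqrt hlr
        _ = r := Real.sqrt_sq hr0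
      clear_value ρ
      clear hρdef
      have hsubL : {x : ℝ × ℝ × ℝ | 0 ≤ x.1 ∧ 0 ≤ x.2.1 ∧ 0 ≤ x.2.2 ∧
          x.1 ^ 2 / (ρ * L1) ^ 2 + x.2.1 ^ 2 / (ρ * L2) ^ 2 + x.2.2 ^ 2 / (ρ * L3) ^ 2 ≤ 1}
          ⊆ ⋃ n ∈ A, cube n := by
        rintro ⟨x, y, z⟩ ⟨hx0, hy0, hz0, hball⟩
        dsimp only at hx0 hy0 hz0 hball
        have hX : x ^ 2 / L1 ^ 2 + y ^ 2 / L2 ^ 2 + z ^ 2 / L3 ^ 2 ≤ ρ ^ 2 := by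
          rw [expand3 x y z L1 L2 L3 ρ, div_le_one (by positivity)] at hball
          exact hball
        set n : ℕ × ℕ × ℕ := (⌊x⌋₊ + 1, ⌊y⌋₊ + 1, ⌊z⌋₊ + 1) with hndef
        have en1 : (n.1:ℝ) = (⌊x⌋₊:ℝ) + 1 := by rw [hndef]; push_cast; ring
        have en2 : (n.2.1:ℝ) = (⌊y⌋₊:ℝ) + 1 := by rw [hndef]; push_cast; ring
        have en3 : (n.2.2:ℝ) = (⌊z⌋₊:ℝ) + 1 := by rw [hndef]; push_cast; ring
        have hp1 : 0 < n.1 := by rw [hndef]; exact Nat.succ_pos _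
        have hp2 : 0 < n.2.1 := by rw [hndef]; exact Nat.succ_pos _
        have hp3 : 0 < n.2.2 := by rw [hndef]; exact Nat.succ_pos _
        clear_value n
        clear hndef
        have f1 : (⌊x⌋₊:ℝ) ≤ x := Nat.floor_le hx0
        have f2 : (⌊y⌋₊:ℝ) ≤ y := Nat.floor_le hy0
        have f3 : (⌊z⌋₊:ℝ) ≤ z := Nat.floor_le hz0
        have g1 : x < (⌊x⌋₊:ℝ) + 1 := Nat.lt_floor_add_one x
        have g2 : y < (⌊y⌋₊:ℝ) + 1 := Nat.lt_floor_add_one y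
        have g3 : z < (⌊z⌋₊:ℝ) + 1 := Nat.lt_floor_add_one z
        simp only [mem_iUnion, exists_prop]
        refine ⟨n, ?_, ?_⟩
        · rw [hmem]
          refine ⟨hp1, hp2, hp3, ?_⟩
          have en1' : (0:ℝ) ≤ (n.1:ℝ) := by rw [en1]; positivity
          have en2' : (0:ℝ) ≤ (n.2.1:ℝ) := by rw [en2]; positivity
          have en3' : (0:ℝ) ≤ (n.2.2:ℝ) := by rw [en3]; positivity
          have eb1 : (n.1:ℝ) ≤ x + 1 := by rw [en1]; linarith
          have eb2 : (n.2.1:ℝ) ≤ y + 1 := by rw [en2]; linarith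
          have eb3 : (n.2.2:ℝ) ≤ z + 1 := by rw [en3]; linarith
          have hsum' : (n.1:ℝ) ^ 2 / L1 ^ 2 + (n.2.1:ℝ) ^ 2 / L2 ^ 2 + (n.2.2:ℝ) ^ 2 / L3 ^ 2
              ≤ ρ ^ 2 + 6 * ρ * L3⁻¹ + ((L1 ^ 2)⁻¹ + (L2 ^ 2)⁻¹ + (L3 ^ 2)⁻¹) :=
            sum_shift_bound hL10 hL20 hL30 hL31 hL32 hρ0.le hx0 hy0 hz0
              en1' en2' en3' eb1 eb2 eb3 hX
          have h6ρ : 6 * ρ * L3⁻¹ ≤ 6 * r * L3⁻¹ := by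
            apply mul_le_mul_of_nonneg_right _ (inv_nonneg.mpr hL30.le)
            linarith
          calc (n.1:ℝ) ^ 2 / L1 ^ 2 + (n.2.1:ℝ) ^ 2 / L2 ^ 2 + (n.2.2:ℝ) ^ 2 / L3 ^ 2
              ≤ ρ ^ 2 + 6 * ρ * L3⁻¹ + ((L1 ^ 2)⁻¹ + (L2 ^ 2)⁻¹ + (L3 ^ 2)⁻¹) := hsum'
          _ ≤ r ^ 2 + dsq := by rw [hρ2, hlbdef, hdsq]; linarith
        · simp only [cube, Set.mem_prod, Set.mem_Ico]
          refine ⟨⟨?_, ?_⟩, ⟨?_, ?_⟩, ⟨?_, ?_⟩⟩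
          · rw [en1]; linarith
          · rw [en1]; linarith
          · rw [en2]; linarith
          · rw [en2]; linarith
          · rw [en3]; linarith
          · rw [en3]; linarith
      have hmono := measure_mono (μ := volume) hsubL
      rw [hVolU, vol_octant_ellipsoid (ρ * L1) (ρ * L2) (ρ * L3)
        (by positivity) (by positivity) (by positivity)] at hmono
      rw [← ENNReal.ofReal_natCast] at hmono
      have hNge : π / 6 * (ρ * L1 * (ρ * L2) * (ρ * L3)) ≤ (A.ncard : ℝ) :=
        (ENNReal.ofReal_le_ofReal_iff (by positivity)).mp hmono
      have heq : π / 6 * (ρ * L1 * (ρ * L2) * (ρ * L3)) = π / 6 * ρ ^ 3 * V := by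
        rw [← hprod]; ring
      rw [hFV, le_div_iff₀ hV0]
      rw [heq] at hNge
      exact hNge
  · -- upper bound restated
    have erw : r ^ 2 + 6 * r * V ^ (-α₃)
        + (V ^ (-(2 * α₁)) + V ^ (-(2 * α₂)) + V ^ (-(2 * α₃))) = ub := by
      rw [einv, e1', e2', e3', hubdef, hdsq]
    rw [erw, ← hudef]
    exact hU



/-- In the thermodynamic limit, F_V(η) → (√2/(3π²)) η^{3/2}. -/
theorem FV_tendsto (α₁ α₂ α₃ : ℝ) (h12 : α₂ ≤ α₁) (h23 : α₃ ≤ α₂) (h3 : 0 < α₃)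
    (hsum : α₁ + α₂ + α₃ = 1) (η : ℝ) (hη : 0 ≤ η) :
    Filter.Tendsto (fun V : ℝ => FV α₁ α₂ α₃ V η) Filter.atTop
      (nhds (Real.sqrt 2 / (3 * Real.pi ^ 2) * η ^ (3 / 2 : ℝ))) := by
  have hπ := Real.pi_pos
  have h2 : 0 < α₂ := lt_of_lt_of_le h3 h23
  have h1 : 0 < α₁ := lt_of_lt_of_le h2 h12
  set r := Real.sqrt (2 * η) / π with hrdef
  have hr0 : 0 ≤ r := by positivity
  have hr2 : r ^ 2 = 2 * η / π ^ 2 := by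
    rw [hrdef, div_pow, Real.sq_sqrt (by linarith : (0:ℝ) ≤ 2 * η)]
  have hval : Real.sqrt 2 / (3 * π ^ 2) * η ^ (3 / 2 : ℝ) = π / 6 * r ^ 3 := by
    have h32 : η ^ (3 / 2 : ℝ) = Real.sqrt η ^ 3 := by
      rw [Real.sqrt_eq_rpow, ← Real.rpow_natCast (η ^ (1 / 2 : ℝ)) 3,
        ← Real.rpow_mul hη]
      norm_num
    have hsplit : r = Real.sqrt 2 * Real.sqrt η / π := by
      rw [hrdef, Real.sqrt_mul (by norm_num : (0:ℝ) ≤ 2)]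
    have hs2 : Real.sqrt 2 ^ 3 = 2 * Real.sqrt 2 := by
      rw [pow_succ, Real.sq_sqrt (by norm_num : (0:ℝ) ≤ 2)]
    rw [h32, hsplit]
    rw [div_pow, mul_pow, hs2]
    field_simp
    ring
  rw [hval]
  have t3 : Tendsto (fun V : ℝ => V ^ (-α₃)) atTop (nhds 0) := tendsto_rpow_neg_atTop h3
  have t1' : Tendsto (fun V : ℝ => V ^ (-(2 * α₁))) atTop (nhds 0) :=
    tendsto_rpow_neg_atTop (by positivity)
  have t2' : Tendsto (fun V : ℝ => V ^ (-(2 * α₂))) atTop (nhds 0) :=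
    tendsto_rpow_neg_atTop (by positivity)
  have t3' : Tendsto (fun V : ℝ => V ^ (-(2 * α₃))) atTop (nhds 0) :=
    tendsto_rpow_neg_atTop (by positivity)
  have innerG : Tendsto (fun V : ℝ => r ^ 2 - 6 * r * V ^ (-α₃)) atTop (nhds (r ^ 2)) := by
    have := tendsto_const_nhds (α := ℝ) (x := r ^ 2) (f := atTop).sub
      ((t3.const_mul (6 * r)))
    simpa using this
  have innerH : Tendsto (fun V : ℝ => r ^ 2 + 6 * r * V ^ (-α₃)
      + (V ^ (-(2 * α₁)) + V ^ (-(2 * α₂)) + V ^ (-(2 * α₃)))) atTop (nhds (r ^ 2)) := by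
    have := (tendsto_const_nhds (α := ℝ) (x := r ^ 2) (f := atTop).add
      ((t3.const_mul (6 * r)))).add ((t1'.add t2').add t3')
    simpa using this
  have hFc : Continuous (fun s : ℝ => π / 6 * Real.sqrt (max s 0) ^ 3) :=
    continuous_const.mul ((Real.continuous_sqrt.comp (continuous_id.max continuous_const)).pow 3)
  have hFc' : Continuous (fun s : ℝ => π / 6 * Real.sqrt s ^ 3) :=
    continuous_const.mul (Real.continuous_sqrt.pow 3)
  have hG : Tendsto (fun V : ℝ => π / 6 * Real.sqrt (max (r ^ 2 - 6 * r * V ^ (-α₃)) 0) ^ 3)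
      atTop (nhds (π / 6 * r ^ 3)) := by
    have := (hFc.tendsto (r ^ 2)).comp innerG
    simp only [Function.comp_def] at this
    rwa [max_eq_left (sq_nonneg r), Real.sqrt_sq hr0] at this
  have hH : Tendsto (fun V : ℝ => π / 6 * Real.sqrt (r ^ 2 + 6 * r * V ^ (-α₃)
      + (V ^ (-(2 * α₁)) + V ^ (-(2 * α₂)) + V ^ (-(2 * α₃)))) ^ 3)
      atTop (nhds (π / 6 * r ^ 3)) := by
    have := (hFc'.tendsto (r ^ 2)).comp innerH
    simp only [Function.comp_def] at this
    rwa [Real.sqrt_sq hr0] at this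
  apply tendsto_of_tendsto_of_tendsto_of_le_of_le' hG hH
  · filter_upwards [eventually_ge_atTop (1:ℝ)] with V hV
    exact (key α₁ α₂ α₃ h12 h23 h3 hsum η r V hη hr0 hr2 hV).1
  · filter_upwards [eventually_ge_atTop (1:ℝ)] with V hV
    exact (key α₁ α₂ α₃ h12 h23 h3 hsum η r V hη hr0 hr2 hV).2
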